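/- Let n > 1, A closed in ℝ^m, and f : A → exp_n(ℝ^m) \ exp_{n-1}(ℝ^m) continuous. For a natural number m' with 1 ≤ m' ≤ n−1, the set O_{m'} = { x ∈ A : |{ y ∈ f(x) : π₁(y) = max π₁(f(x)) }| < n − m' } is open in A. -/

import Mathlib

open Set Topology

/-- The Vietoris topology on the powerset of `Z`, generated by the sets
`{A | A ⊆ U}` and `{A | A ∩ U ≠ ∅}` for `U` open.  Its restriction to the
nonempty closed subsets of `Z` is the usual Vietoris topology on `2^Z`. -/
def vietoris (Z : Type*) [TopologicalSpace Z] : TopologicalSpace (Set Z) :=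
  TopologicalSpace.generateFrom
    ({S | ∃ U : Set Z, IsOpen U ∧ S = {A : Set Z | A ⊆ U}} ∪
     {S | ∃ U : Set Z, IsOpen U ∧ S = {A : Set Z | (A ∩ U).Nonempty}})

/-- Continuity of a set-valued map with respect to the Vietoris topology. -/
def VCont {X Z : Type*} [tX : TopologicalSpace X] [TopologicalSpace Z] (f : X → Set Z) : Prop :=
  @Continuous X (Set Z) tX (vietoris Z) f

/-- `f` is colorable by at most `N` bright colors: there is a cover of `X` by at most `N`
closed sets `F`, each disjoint from the closure in `Z` of `⋃ x ∈ F, f x`. -/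
def BrightColorable {Z : Type*} [TopologicalSpace Z] {X : Set Z}
    (f : X → Set Z) (N : ℕ) : Prop :=
  ∃ 𝓕 : Finset (Set X), 𝓕.card ≤ N ∧ (∀ x : X, ∃ F ∈ 𝓕, x ∈ F) ∧
    ∀ F ∈ 𝓕, IsClosed F ∧ Disjoint (Subtype.val '' F) (closure (⋃ x ∈ F, f x))

lemma coord_dist_le {m : ℕ} (i : Fin m) (x y : EuclideanSpace ℝ (Fin m)) :
    dist (x i) (y i) ≤ dist x y := by
  rw [EuclideanSpace.dist_eq]
  have h : dist (x i) (y i) ^ 2 ≤ ∑ j, dist (x j) (y j) ^ 2 :=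
    Finset.single_le_sum (f := fun j => dist (x j) (y j) ^ 2)
      (fun j _ => sq_nonneg _) (Finset.mem_univ i)
  calc dist (x i) (y i) = Real.sqrt (dist (x i) (y i) ^ 2) := (Real.sqrt_sq dist_nonneg).symm
    _ ≤ _ := Real.sqrt_le_sqrt h

lemma vietoris_open_aux {Z : Type*} [TopologicalSpace Z] {F : Set Z} (hF : F.Finite)
    (U : Z → Set Z) (hU : ∀ y, IsOpen (U y)) :
    IsOpen[vietoris Z]
      ({B : Set Z | B ⊆ ⋃ y ∈ F, U y} ∩ ⋂ y ∈ F, {B : Set Z | (B ∩ U y).Nonempty}) := by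
  letI : TopologicalSpace (Set Z) := vietoris Z
  apply IsOpen.inter
  · exact TopologicalSpace.isOpen_generateFrom_of_mem
      (Or.inl ⟨_, isOpen_biUnion (fun y _ => hU y), rfl⟩)
  · exact hF.isOpen_biInter fun y _ =>
      TopologicalSpace.isOpen_generateFrom_of_mem (Or.inr ⟨_, hU y, rfl⟩)

theorem stmt7 {m n m' : ℕ} (hm : 0 < m) (hn : 1 < n) (hm'1 : 1 ≤ m') (hm'n : m' ≤ n - 1)
    (A : Set (EuclideanSpace ℝ (Fin m))) (hA : IsClosed A)
    (f : A → Set (EuclideanSpace ℝ (Fin m)))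
    (hcard : ∀ x, (f x).Finite ∧ (f x).ncard = n)
    (hcont : VCont f) :
    IsOpen {x : A | {y ∈ f x | y ⟨0, hm⟩ = sSup ((fun z => z ⟨0, hm⟩) '' f x)}.ncard < n - m'} := by
  classical
  set π : EuclideanSpace ℝ (Fin m) → ℝ := fun z => z ⟨0, hm⟩ with hπdef
  have hπlip : ∀ x y : EuclideanSpace ℝ (Fin m), |π x - π y| ≤ dist x y := by
    intro x y
    simpa [Real.dist_eq] using coord_dist_le ⟨0, hm⟩ x y
  rw [isOpen_iff_mem_nhds]
  intro x₀ hx₀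
  rw [mem_nhds_iff]
  simp only [mem_setOf_eq] at hx₀
  obtain ⟨hFfin, hFcard⟩ := hcard x₀
  set F := f x₀ with hFdef
  set M := sSup (π '' F) with hMdef
  have hFne : F.Nonempty := by
    apply nonempty_of_ncard_ne_zero
    rw [hFcard]
    exact Nat.ne_zero_of_lt hn
  have hbdd : BddAbove (π '' F) := (hFfin.image π).bddAbove
  have hle : ∀ y ∈ F, π y ≤ M := fun y hy => le_csSup hbdd ⟨y, hy, rfl⟩
  set K := {y ∈ F | π y = M} with hKdef
  have hKF : K ⊆ F := sep_subset _ _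
  have hKfin : K.Finite := hFfin.subset hKF
  have hKne : K.Nonempty := by
    obtain ⟨y, hy, hyM⟩ := (hFne.image π).csSup_mem (hFfin.image π)
    exact ⟨y, hy, hyM⟩
  -- the finite set of positive "gaps"
  set T : Set ℝ := ((fun p : EuclideanSpace ℝ (Fin m) × EuclideanSpace ℝ (Fin m) =>
      dist p.1 p.2) '' ((F ×ˢ F) \ {p | p.1 = p.2})) ∪ ((fun y => M - π y) '' (F \ K)) with hTdef
  have hTfin : T.Finite :=
    (((hFfin.prod hFfin).diff).image _).union ((hFfin.diff).image _)
  have hTne : T.Nonempty := by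
    have h2 : 1 < F.ncard := by rw [hFcard]; exact hn
    obtain ⟨a, b, ha, hb, hab⟩ := (Set.one_lt_ncard_iff hFfin).mp h2
    exact ⟨dist a b, Or.inl ⟨(a, b), ⟨⟨ha, hb⟩, hab⟩, rfl⟩⟩
  have hTpos : ∀ t ∈ T, 0 < t := by
    rintro t (⟨⟨a, b⟩, ⟨⟨ha, hb⟩, hab⟩, rfl⟩ | ⟨y, ⟨hyF, hyK⟩, rfl⟩)
    · exact dist_pos.mpr hab
    · have : π y ≠ M := fun h => hyK ⟨hyF, h⟩
      have := hle y hyF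
      simp only [sub_pos]
      exact lt_of_le_of_ne ‹π y ≤ M› ‹π y ≠ M›
  set δ := sInf T / 3 with hδdef
  have hsInfT : 0 < sInf T := hTpos _ (hTne.csInf_mem hTfin)
  have hδ : 0 < δ := by positivity
  have hsep : ∀ y ∈ F, ∀ z ∈ F, y ≠ z → 3 * δ ≤ dist y z := by
    intro y hy z hz hyz
    have := csInf_le hTfin.bddBelow (Or.inl ⟨(y, z), ⟨⟨hy, hz⟩, hyz⟩, rfl⟩ : dist y z ∈ T)
    rw [hδdef]; linarith
  have hgap : ∀ y ∈ F, y ∉ K → 3 * δ ≤ M - π y := by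
    intro y hy hyK
    have := csInf_le hTfin.bddBelow (Or.inr ⟨y, ⟨hy, hyK⟩, rfl⟩ : M - π y ∈ T)
    rw [hδdef]; linarith
  -- the Vietoris neighborhood
  set U : EuclideanSpace ℝ (Fin m) → Set (EuclideanSpace ℝ (Fin m)) :=
    fun y => Metric.ball y δ with hUdef
  -- a point is in at most one ball
  have huniq : ∀ g : EuclideanSpace ℝ (Fin m), ∀ y ∈ F, ∀ z ∈ F,
      g ∈ U y → g ∈ U z → y = z := by
    intro g y hy z hz hgy hgz
    by_contra hyz
    have h3 := hsep y hy z hz hyz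
    have : dist y z ≤ dist y g + dist g z := dist_triangle y g z
    rw [Metric.mem_ball] at hgy hgz
    rw [dist_comm y g] at this
    linarith
  set V : Set (Set (EuclideanSpace ℝ (Fin m))) :=
    {B | B ⊆ ⋃ y ∈ F, U y} ∩ ⋂ y ∈ F, {B | (B ∩ U y).Nonempty} with hVdef
  have hVopen : IsOpen[vietoris (EuclideanSpace ℝ (Fin m))] V :=
    vietoris_open_aux hFfin U (fun y => Metric.isOpen_ball)
  have hc : @Continuous _ _ _ (vietoris (EuclideanSpace ℝ (Fin m))) f := hcont
  have hWopen : IsOpen (f ⁻¹' V) := continuous_def.mp hc V hVopen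
  refine ⟨f ⁻¹' V, ?_, hWopen, ?_⟩
  · -- f ⁻¹' V ⊆ our set
    intro x hx
    simp only [mem_preimage, hVdef, mem_inter_iff, mem_iInter] at hx
    obtain ⟨hsub, hmeet⟩ := hx
    obtain ⟨hGfin, hGcard⟩ := hcard x
    set G := f x with hGdef
    have hGne : G.Nonempty := by
      apply nonempty_of_ncard_ne_zero
      rw [hGcard]
      exact Nat.ne_zero_of_lt hn
    -- the "center" map
    set c : EuclideanSpace ℝ (Fin m) → EuclideanSpace ℝ (Fin m) :=
      fun g => if h : ∃ y, y ∈ F ∧ g ∈ U y then h.choose else g with hcdef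
    have hcF : ∀ g ∈ G, c g ∈ F ∧ g ∈ U (c g) := by
      intro g hg
      have hex : ∃ y, y ∈ F ∧ g ∈ U y := by
        have h := hsub hg
        simpa only [mem_iUnion, exists_prop] using h
      rw [hcdef]
      simp only [hex, dif_pos]
      exact ⟨hex.choose_spec.1, hex.choose_spec.2⟩
    have hsurj : ∀ y ∈ F, ∃ g ∈ G, c g = y := by
      intro y hy
      obtain ⟨g, hgG, hgy⟩ := hmeet y hy
      exact ⟨g, hgG, huniq g (c g) (hcF g hgG).1 y hy (hcF g hgG).2 hgy⟩
    have himg : c '' G = F := by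
      apply Subset.antisymm
      · rintro _ ⟨g, hg, rfl⟩; exact (hcF g hg).1
      · intro y hy; obtain ⟨g, hg, rfl⟩ := hsurj y hy; exact ⟨g, hg, rfl⟩
    have hinj : InjOn c G := by
      apply Set.injOn_of_ncard_image_eq _ hGfin
      rw [himg, hFcard, hGcard]
    -- the maximum of π on G
    set M' := sSup (π '' G) with hM'def
    have hbddG : BddAbove (π '' G) := (hGfin.image π).bddAbove
    have hleG : ∀ g ∈ G, π g ≤ M' := fun g hg => le_csSup hbddG ⟨g, hg, rfl⟩
    have hM'ge : M - δ < M' := by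
      obtain ⟨yh, hyhF, hyhM⟩ := hKne
      obtain ⟨gh, hghG, hghy⟩ := hmeet yh hyhF
      rw [hUdef] at hghy
      simp only [Metric.mem_ball] at hghy
      have h1 := hπlip gh yh
      have h2 := hleG gh hghG
      have := abs_le.mp (h1.trans hghy.le)
      -- this is too strong; instead:
      have h3 : |π gh - π yh| < δ := lt_of_le_of_lt h1 hghy
      have h4 := abs_le.mp h3.le
      have : π yh - δ ≤ π gh := by linarith [h4.1]
      rw [hyhM] at this
      rcases eq_or_lt_of_le this with heq | hlt
      ·
        have : π yh - π gh < δ := by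
          have := neg_abs_le (π gh - π yh)
          linarith [h3]
        rw [hyhM] at this
        linarith [hleG gh hghG]
      · linarith [hleG gh hghG]
    have hM'mem : M' ∈ π '' G := (hGne.image π).csSup_mem (hGfin.image π)
    show ({y ∈ G | π y = M'}).ncard < n - m'
    have hmap : ∀ g ∈ {y ∈ G | π y = M'}, c g ∈ K := by
      rintro g ⟨hgG, hgM'⟩
      obtain ⟨hcgF, hgball⟩ := hcF g hgG
      refine ⟨hcgF, ?_⟩
      by_contra hcgK
      have h3 := hgap (c g) hcgF (fun h => hcgK h.2)
      rw [hUdef] at hgball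
      simp only [Metric.mem_ball] at hgball
      have h1 : |π g - π (c g)| < δ := lt_of_le_of_lt (hπlip g (c g)) hgball
      have h4 := abs_le.mp h1.le
      -- π g ≤ π (c g) + δ ≤ M - 3δ + δ = M - 2δ, but π g = M' > M - δ
      have : π g ≤ π (c g) + δ := by linarith [h4.1]
      rw [hgM'] at this
      linarith
    calc ({y ∈ G | π y = M'}).ncard
        ≤ K.ncard := Set.ncard_le_ncard_of_injOn c hmap
          (hinj.mono (sep_subset _ _)) hKfin
      _ < n - m' := hx₀
  · -- x₀ ∈ f ⁻¹' V
    simp only [mem_preimage, hVdef, mem_inter_iff, mem_iInter]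
    constructor
    · intro y hy
      exact mem_biUnion hy (Metric.mem_ball_self hδ)
    · intro y hy
      exact ⟨y, hy, Metric.mem_ball_self hδ⟩
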